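/- Let m be an odd positive integer, F = GF(2^m), and r = (m−1)/2. Then the map (a₀, a₁, ..., a_r) ↦ Σ_{t=0}^r P^t(a_t) is a bijection from F^{(m+1)/2} onto the set of all m×m binary symmetric matrices; in particular every symmetric F₂-bilinear form on F₂^m is represented by exactly one matrix in DG(m,(m−1)/2). -/

import Mathlib

noncomputable section

namespace DGPaper

/-- The absolute trace `GF(2^m) → 𝔽₂`. -/
def tr {m : ℕ} (x : GaloisField 2 m) : ZMod 2 :=
  Algebra.trace (ZMod 2) (GaloisField 2 m) x

/-- Lift a bit to `ℤ₄`. -/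
def lift2 (v : ZMod 2) : ZMod 4 := (v.val : ZMod 4)

/-- `i^v` for `v ∈ ℤ₄`. -/
def zeta (v : ZMod 4) : ℂ := Complex.I ^ v.val

/-- The field element of `GF(2^m)` associated to a binary `m`-tuple via the basis
`1, ξ, …, ξ^{m-1}`. -/
def fld {m : ℕ} (ξ : GaloisField 2 m) (x : Fin m → ZMod 2) : GaloisField 2 m :=
  ∑ j : Fin m, x j • ξ ^ (j : ℕ)

/-- The binary symmetric matrix `P^t(a)`: for `t = 0` it represents the bilinear form
`(x,y) ↦ Tr(x y a)`, and for `t ≥ 1` the (zero-diagonal) form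
`(x,y) ↦ Tr((x y^{2^t} + x^{2^t} y) a)`, in the basis `1, ξ, …, ξ^{m-1}` of `GF(2^m)`
over `𝔽₂`. -/
def Pmat {m : ℕ} (ξ : GaloisField 2 m) (t : ℕ) (a : GaloisField 2 m) :
    Matrix (Fin m) (Fin m) (ZMod 2) :=
  Matrix.of fun i j =>
    if t = 0 then tr (ξ ^ (i : ℕ) * ξ ^ (j : ℕ) * a)
    else tr ((ξ ^ (i : ℕ) * (ξ ^ (j : ℕ)) ^ (2 ^ t) + (ξ ^ (i : ℕ)) ^ (2 ^ t) * ξ ^ (j : ℕ)) * a)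

/-- The quadratic form `x P xᵀ` evaluated in `ℤ₄` (the `0/1` entries of `P` and `x`
being lifted to `ℤ₄`). -/
def qform {m : ℕ} (P : Matrix (Fin m) (Fin m) (ZMod 2)) (x : Fin m → ZMod 2) : ZMod 4 :=
  ∑ i : Fin m, ∑ j : Fin m, lift2 (x i) * lift2 (P i j) * lift2 (x j)

instance {m : ℕ} : Fintype (GaloisField 2 m) := Fintype.ofFinite _


-- frobenius as an AlgEquiv over ZMod 2
def frobAlg (m : ℕ) : GaloisField 2 m ≃ₐ[ZMod 2] GaloisField 2 m :=
  AlgEquiv.ofRingEquiv (f := frobeniusEquiv (GaloisField 2 m) 2)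
    (fun c => by
      show frobenius (GaloisField 2 m) 2 _ = _
      rw [frobenius_def, ← map_pow, ZMod.pow_card])

lemma frobAlg_apply (m : ℕ) (z : GaloisField 2 m) : frobAlg m z = z ^ 2 := rfl

lemma tr_sq {m : ℕ} (z : GaloisField 2 m) : tr (z ^ 2) = tr z := by
  have h := Algebra.trace_eq_of_algEquiv (frobAlg m) z
  rw [frobAlg_apply] at h
  exact h

lemma tr_pow_pow {m : ℕ} (k : ℕ) (z : GaloisField 2 m) : tr (z ^ 2 ^ k) = tr z := by
  induction k with
  | zero => simp
  | succ k ih => rw [pow_succ, pow_mul, tr_sq, ih]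

lemma pow_card_self {m : ℕ} (hm0 : m ≠ 0) (z : GaloisField 2 m) : z ^ 2 ^ m = z := by
  have h := FiniteField.pow_card z
  rwa [← Nat.card_eq_fintype_card, GaloisField.card 2 m hm0] at h

lemma tr_sum {m : ℕ} {ι : Type*} (s : Finset ι) (f : ι → GaloisField 2 m) :
    tr (∑ i ∈ s, f i) = ∑ i ∈ s, tr (f i) :=
  map_sum (Algebra.trace (ZMod 2) (GaloisField 2 m)) f s

lemma tr_add {m : ℕ} (x y : GaloisField 2 m) : tr (x + y) = tr x + tr y :=
  map_add (Algebra.trace (ZMod 2) (GaloisField 2 m)) x y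

end DGPaper

namespace DGPaper

lemma trace_ker_zero {m : ℕ} (hm0 : 0 < m) (ξ : GaloisField 2 m)
    (hξ : LinearIndependent (ZMod 2) fun j : Fin m => ξ ^ (j : ℕ))
    (w : GaloisField 2 m) (h : ∀ i : Fin m, tr (ξ ^ (i : ℕ) * w) = 0) : w = 0 := by
  have hfr : Module.finrank (ZMod 2) (GaloisField 2 m) = m :=
    GaloisField.finrank 2 hm0.ne'
  haveI : Nonempty (Fin m) := ⟨⟨0, hm0⟩⟩
  let b : Module.Basis (Fin m) (ZMod 2) (GaloisField 2 m) :=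
    basisOfLinearIndependentOfCardEqFinrank hξ (by simp [hfr])
  have hb : ∀ i : Fin m, b i = ξ ^ (i : ℕ) := fun i => by
    simp [b, coe_basisOfLinearIndependentOfCardEqFinrank]
  have hflip : (Algebra.traceForm (ZMod 2) (GaloisField 2 m)).flip w = 0 := by
    apply b.ext
    intro i
    simp only [LinearMap.flip_apply, Algebra.traceForm_apply, LinearMap.zero_apply, hb]
    exact h i
  have h2 : ∀ x, Algebra.trace (ZMod 2) (GaloisField 2 m) (x * w) = 0 := by
    intro x
    have := LinearMap.congr_fun hflip x
    simpa [Algebra.traceForm_apply] using this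
  exact (traceForm_nondegenerate (ZMod 2) (GaloisField 2 m)).1 w
    (fun y => by rw [Algebra.traceForm_apply, mul_comm]; exact h2 y)

end DGPaper

namespace DGPaper

open Polynomial

lemma kernel_zero {m : ℕ} (hm : Odd m) (hm0 : 0 < m) (ξ : GaloisField 2 m)
    (hξ : LinearIndependent (ZMod 2) fun j : Fin m => ξ ^ (j : ℕ))
    (c : Fin ((m + 1) / 2) → GaloisField 2 m)
    (h : ∑ t : Fin ((m + 1) / 2), Pmat ξ (t : ℕ) (c t) = 0) :
    c = 0 := by
  obtain ⟨k, hk⟩ := hm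
  have hR : (m + 1) / 2 = k + 1 := by omega
  -- bounds for indices
  have hlt : ∀ t : Fin ((m + 1) / 2), (t : ℕ) ≤ k := fun t => by
    have := t.isLt; omega
  have hub : ∀ t : Fin ((m + 1) / 2), (t : ℕ) ≠ 0 → k + 1 ≤ m - (t : ℕ) ∧ m - (t : ℕ) ≤ m - 1 :=
    fun t ht => by have := hlt t; omega
  -- the linearized polynomial
  set p : Polynomial (GaloisField 2 m) :=
    ∑ t : Fin ((m + 1) / 2), (C (c t) * X ^ (2 ^ (t : ℕ)) +
      if (t : ℕ) = 0 then 0 else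
        C ((c t) ^ (2 ^ (m - (t : ℕ)))) * X ^ (2 ^ (m - (t : ℕ)))) with hp
  have heval : ∀ y : GaloisField 2 m, p.eval y =
      ∑ t : Fin ((m + 1) / 2), ((c t) * y ^ (2 ^ (t : ℕ)) +
        if (t : ℕ) = 0 then 0 else (c t) ^ (2 ^ (m - (t : ℕ))) * y ^ (2 ^ (m - (t : ℕ)))) := by
    intro y
    rw [hp, Polynomial.eval_finset_sum]
    refine Finset.sum_congr rfl fun t _ => ?_
    split_ifs with ht <;> simp
  -- key frobenius-shift identity for traces
  have key : ∀ (A B a : GaloisField 2 m) (s : ℕ), s ≤ m →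
      tr (A ^ 2 ^ s * B * a) = tr (A * B ^ 2 ^ (m - s) * a ^ 2 ^ (m - s)) := by
    intro A B a s hs
    rw [← tr_pow_pow (m - s) (A ^ 2 ^ s * B * a)]
    congr 1
    rw [mul_pow, mul_pow, ← pow_mul, ← pow_add]
    rw [Nat.add_sub_cancel' hs, pow_card_self hm0.ne']
  -- Step A: entries as trace of the polynomial
  have hA : ∀ i j : Fin m, tr (ξ ^ (i : ℕ) * p.eval (ξ ^ (j : ℕ))) = 0 := by
    intro i j
    have hsum : (∑ t : Fin ((m + 1) / 2), Pmat ξ (t : ℕ) (c t)) i j = 0 := by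
      rw [h]; rfl
    rw [Matrix.sum_apply] at hsum
    rw [heval, Finset.mul_sum, tr_sum, ← hsum]
    refine Finset.sum_congr rfl fun t _ => ?_
    by_cases ht : (t : ℕ) = 0
    · simp only [ht, Pmat, Matrix.of_apply, if_pos rfl, if_true, pow_zero, pow_one]
      exact congrArg tr (by ring)
    · simp only [Pmat, Matrix.of_apply, if_neg ht]
      have hs : (t : ℕ) ≤ m := by have := hlt t; omega
      rw [mul_add, tr_add, add_mul, tr_add]
      congr 1
      · exact congrArg tr (by ring)
      · rw [key (ξ ^ (i : ℕ)) (ξ ^ (j : ℕ)) (c t) (t : ℕ) hs]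
        exact congrArg tr (by ring)
  -- Step B: the polynomial vanishes at basis points
  have hB : ∀ j : Fin m, p.eval (ξ ^ (j : ℕ)) = 0 := fun j =>
    trace_ker_zero hm0 ξ hξ _ (fun i => hA i j)
  -- Step C: the polynomial vanishes everywhere (it is linearized)
  have hadd : ∀ y z : GaloisField 2 m, p.eval (y + z) = p.eval y + p.eval z := by
    intro y z
    rw [heval, heval, heval, ← Finset.sum_add_distrib]
    refine Finset.sum_congr rfl fun t _ => ?_
    have h1 : (y + z) ^ (2 : ℕ) ^ ((t : ℕ)) = y ^ (2:ℕ) ^ ((t : ℕ)) + z ^ (2:ℕ) ^ ((t : ℕ)) :=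
      add_pow_char_pow y z 2 ((t : ℕ))
    have h2 : (y + z) ^ (2 : ℕ) ^ (m - (t : ℕ)) =
        y ^ (2:ℕ) ^ (m - (t : ℕ)) + z ^ (2:ℕ) ^ (m - (t : ℕ)) := add_pow_char_pow y z 2 (m - (t : ℕ))
    split_ifs with ht
    · rw [h1]; ring
    · rw [h1, h2]; ring
  have hsmul : ∀ (cc : ZMod 2) (y : GaloisField 2 m), p.eval (cc • y) = cc • p.eval y := by
    have hcc : ∀ cc : ZMod 2, cc = 0 ∨ cc = 1 := by decide
    intro cc y
    rcases hcc cc with rfl | rfl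
    · rw [zero_smul, zero_smul, heval]
      apply Finset.sum_eq_zero
      intro t _
      have hz : ∀ n : ℕ, (0 : GaloisField 2 m) ^ 2 ^ n = 0 := fun n =>
        zero_pow (pow_pos (by norm_num : (0:ℕ) < 2) n).ne'
      split_ifs with ht <;> simp [hz]
    · rw [one_smul, one_smul]
  have hall : ∀ y : GaloisField 2 m, p.eval y = 0 := by
    have hfr : Module.finrank (ZMod 2) (GaloisField 2 m) = m :=
      GaloisField.finrank 2 hm0.ne'
    haveI : Nonempty (Fin m) := ⟨⟨0, hm0⟩⟩
    let b : Module.Basis (Fin m) (ZMod 2) (GaloisField 2 m) :=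
      basisOfLinearIndependentOfCardEqFinrank hξ (by simp [hfr])
    have hb : ∀ i : Fin m, b i = ξ ^ (i : ℕ) := fun i => by
      simp [b, coe_basisOfLinearIndependentOfCardEqFinrank]
    let φ : GaloisField 2 m →ₗ[ZMod 2] GaloisField 2 m :=
      { toFun := fun y => p.eval y
        map_add' := hadd
        map_smul' := hsmul }
    have hφ : φ = 0 := b.ext fun j => by
      show p.eval (b j) = 0
      rw [hb]; exact hB j
    intro y
    exact LinearMap.congr_fun hφ y
  -- Step D: the polynomial is zero
  have hdeg : p.natDegree < Fintype.card (GaloisField 2 m) := by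
    have hcard : Fintype.card (GaloisField 2 m) = 2 ^ m := by
      rw [← Nat.card_eq_fintype_card, GaloisField.card 2 m hm0.ne']
    rw [hcard]
    have hle : p.natDegree ≤ 2 ^ (m - 1) := by
      rw [hp]
      refine Polynomial.natDegree_sum_le_of_forall_le _ _ fun t _ => ?_
      refine (Polynomial.natDegree_add_le _ _).trans (max_le ?_ ?_)
      · refine (Polynomial.natDegree_C_mul_le _ _).trans ?_
        rw [Polynomial.natDegree_X_pow]
        exact Nat.pow_le_pow_right (by norm_num) (by have := hlt t; omega)
      · split_ifs with ht
        · simp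
        · refine (Polynomial.natDegree_C_mul_le _ _).trans ?_
          rw [Polynomial.natDegree_X_pow]
          exact Nat.pow_le_pow_right (by norm_num) (hub t ht).2
    exact lt_of_le_of_lt hle (Nat.pow_lt_pow_right one_lt_two (by omega))
  have hp0 : p = 0 :=
    Polynomial.eq_zero_of_natDegree_lt_card_of_eval_eq_zero p Function.injective_id
      (fun y => hall y) hdeg
  -- Step E: extract coefficients
  funext s
  have hpow : ∀ a b : ℕ, (2:ℕ) ^ a = 2 ^ b → a = b := fun a b h =>
    Nat.pow_right_injective (le_refl 2) h
  have hco := congrArg (fun q => Polynomial.coeff q (2 ^ (s : ℕ))) hp0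
  simp only [Polynomial.coeff_zero] at hco
  rw [hp, Polynomial.finset_sum_coeff] at hco
  have hterm : ∀ t : Fin ((m + 1) / 2),
      Polynomial.coeff (C (c t) * X ^ (2 ^ (t : ℕ)) +
        if (t : ℕ) = 0 then 0 else
          C ((c t) ^ (2 ^ (m - (t : ℕ)))) * X ^ (2 ^ (m - (t : ℕ)))) (2 ^ (s : ℕ)) =
      if t = s then c t else 0 := by
    intro t
    rw [Polynomial.coeff_add, Polynomial.coeff_C_mul, Polynomial.coeff_X_pow]
    have h2 : (if (t : ℕ) = 0 then (0 : Polynomial (GaloisField 2 m)) else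
        C ((c t) ^ (2 ^ (m - (t : ℕ)))) * X ^ (2 ^ (m - (t : ℕ)))).coeff (2 ^ (s : ℕ)) = 0 := by
      split_ifs with ht
      · simp
      · rw [Polynomial.coeff_C_mul, Polynomial.coeff_X_pow, if_neg, mul_zero]
        intro hcon
        have := hpow _ _ hcon
        have := (hub t ht).1
        have := hlt s
        omega
    rw [h2, add_zero]
    by_cases hts : t = s
    · subst hts; simp
    · rw [if_neg, mul_zero, if_neg hts]
      intro hcon
      exact hts (Fin.ext (hpow _ _ hcon).symm)
  rw [Finset.sum_congr rfl (fun t _ => hterm t)] at hco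
  rw [Finset.sum_ite_eq' Finset.univ s (fun t => c t)] at hco
  simp only [Finset.mem_univ, if_true] at hco
  simp [← hco]

end DGPaper

namespace DGPaper

def symmEquiv (m : ℕ) : {A : Matrix (Fin m) (Fin m) (ZMod 2) // A.IsSymm} ≃
    ({p : Fin m × Fin m // p.1 ≤ p.2} → ZMod 2) where
  toFun A q := A.1 q.1.1 q.1.2
  invFun f := ⟨Matrix.of fun i j =>
      if h : i ≤ j then f ⟨(i, j), h⟩ else f ⟨(j, i), le_of_not_ge h⟩, by
    ext i j
    simp only [Matrix.transpose_apply, Matrix.of_apply]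
    by_cases hij : i ≤ j
    · by_cases hji : j ≤ i
      · have : i = j := le_antisymm hij hji
        subst this; simp
      · rw [dif_neg hji, dif_pos hij]
    · rw [dif_pos (le_of_not_ge hij), dif_neg hij]⟩
  left_inv A := by
    apply Subtype.ext
    ext i j
    simp only [Matrix.of_apply]
    by_cases hij : i ≤ j
    · rw [dif_pos hij]
    · rw [dif_neg hij]
      exact A.2.apply i j
  right_inv f := by
    funext q
    obtain ⟨⟨i, j⟩, hq⟩ := q
    simp only [Matrix.of_apply]
    rw [dif_pos hq]

lemma card_symm (m : ℕ) :
    Nat.card {A : Matrix (Fin m) (Fin m) (ZMod 2) // A.IsSymm} = 2 ^ ((m + 1) * m / 2) := by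
  rw [Nat.card_congr (symmEquiv m), Nat.card_fun,
    Nat.card_congr (Sym2.sortEquiv (α := Fin m)).symm]
  rw [Nat.card_eq_fintype_card, Nat.card_eq_fintype_card, Sym2.card, Fintype.card_fin,
    ZMod.card, Nat.choose_two_right]
  simp

end DGPaper

namespace DGPaper

open Matrix

lemma tr_sub {m : ℕ} (x y : GaloisField 2 m) : tr (x - y) = tr x - tr y :=
  map_sub (Algebra.trace (ZMod 2) (GaloisField 2 m)) x y

lemma Pmat_sub {m : ℕ} (ξ : GaloisField 2 m) (t : ℕ) (a b : GaloisField 2 m) :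
    Pmat ξ t (a - b) = Pmat ξ t a - Pmat ξ t b := by
  ext i j
  simp only [Pmat, Matrix.of_apply, Matrix.sub_apply]
  split_ifs with ht
  · rw [mul_sub, tr_sub]
  · rw [mul_sub, tr_sub]

lemma Pmat_transpose {m : ℕ} (ξ : GaloisField 2 m) (t : ℕ) (a : GaloisField 2 m) :
    (Pmat ξ t a)ᵀ = Pmat ξ t a := by
  ext i j
  simp only [Matrix.transpose_apply, Pmat, Matrix.of_apply]
  split_ifs with ht
  · exact congrArg tr (by ring)
  · exact congrArg tr (by ring)

/-- For odd `m` and `r = (m-1)/2`, the map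
`(a₀, …, a_r) ↦ ∑_{t=0}^r P^t(a_t)` is a bijection from `F^{(m+1)/2}` onto the set of
all `m × m` binary symmetric matrices; in particular every symmetric `𝔽₂`-bilinear form
on `𝔽₂^m` is represented by exactly one matrix in `DG(m, (m-1)/2)`. -/
theorem delsarteGoethals_full_level_bijective_onto_symmetric_matrices
    (m : ℕ) (hm : Odd m) (hm0 : 0 < m)
    (ξ : GaloisField 2 m)
    (hξ : LinearIndependent (ZMod 2) fun j : Fin m => ξ ^ (j : ℕ)) :
    Function.Injective
        (fun a : Fin ((m + 1) / 2) → GaloisField 2 m =>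
          ∑ t : Fin ((m + 1) / 2), Pmat ξ (t : ℕ) (a t)) ∧
      Set.range
          (fun a : Fin ((m + 1) / 2) → GaloisField 2 m =>
            ∑ t : Fin ((m + 1) / 2), Pmat ξ (t : ℕ) (a t)) =
        {A : Matrix (Fin m) (Fin m) (ZMod 2) | A.IsSymm} := by
  set f := fun a : Fin ((m + 1) / 2) → GaloisField 2 m =>
    ∑ t : Fin ((m + 1) / 2), Pmat ξ (t : ℕ) (a t) with hf
  have hinj : Function.Injective f := by
    intro a b hab
    have hzero : ∑ t : Fin ((m + 1) / 2), Pmat ξ (t : ℕ) ((a - b) t) = 0 := by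
      have hrw : ∀ t : Fin ((m + 1) / 2),
          Pmat ξ (t : ℕ) ((a - b) t) = Pmat ξ (t : ℕ) (a t) - Pmat ξ (t : ℕ) (b t) :=
        fun t => by rw [Pi.sub_apply, Pmat_sub]
      rw [Finset.sum_congr rfl (fun t _ => hrw t), Finset.sum_sub_distrib]
      exact sub_eq_zero_of_eq hab
    have hc := kernel_zero hm hm0 ξ hξ (a - b) hzero
    exact sub_eq_zero.mp hc
  refine ⟨hinj, ?_⟩
  have hsubset : Set.range f ⊆ {A : Matrix (Fin m) (Fin m) (ZMod 2) | A.IsSymm} := by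
    rintro _ ⟨a, rfl⟩
    show (f a).IsSymm
    show (f a)ᵀ = f a
    rw [hf]
    simp only
    rw [Matrix.transpose_sum]
    exact Finset.sum_congr rfl fun t _ => Pmat_transpose ξ (t : ℕ) (a t)
  have h1 : (Set.range f).ncard = Nat.card (Fin ((m + 1) / 2) → GaloisField 2 m) := by
    rw [← Nat.card_coe_set_eq, Nat.card_range_of_injective hinj]
  have h2 : {A : Matrix (Fin m) (Fin m) (ZMod 2) | A.IsSymm}.ncard = 2 ^ ((m + 1) * m / 2) := by
    rw [← Nat.card_coe_set_eq]
    exact card_symm m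
  have h3 : Nat.card (Fin ((m + 1) / 2) → GaloisField 2 m) = 2 ^ ((m + 1) * m / 2) := by
    rw [Nat.card_fun, GaloisField.card 2 m hm0.ne', Nat.card_eq_fintype_card (α := Fin _),
      Fintype.card_fin, ← pow_mul]
    congr 1
    obtain ⟨k, hk⟩ := hm
    subst hk
    have e1 : (2 * k + 1 + 1) / 2 = k + 1 := by omega
    have e2 : (2 * k + 1 + 1) * (2 * k + 1) = 2 * ((2 * k + 1) * (k + 1)) := by ring
    rw [e1, e2, Nat.mul_div_cancel_left _ (by norm_num : 0 < 2)]
  exact (Set.eq_of_subset_of_ncard_le hsubset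
    (le_of_eq (h2.trans (h3.symm.trans h1.symm))) (Set.toFinite _))
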